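/- Let R be a commutative ring, m ∈ ℕ, Z an m×m matrix over R, u ∈ R (or an indeterminate over R), and σ a permutation of {1,…,m}. Then F((((Z − u·I))_{i,σ(i)})_{i ∈ {1,…,m}}) = ∑_{R' ⊆ Fix(σ)} (−u)^{|R'|} · F((Z_{i,σ(i)})_{i ∈ {1,…,m}∖R'}), where Fix(σ) = {i : σ(i) = i}. -/

import Mathlib

open Matrix

/-- `Ffam s x = ∑_{i ∈ s} ∏_{j ∈ s \ {i}} x j`. -/
def Ffam {ι R : Type*} [DecidableEq ι] [CommRing R] (s : Finset ι) (x : ι → R) : R :=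
  ∑ i ∈ s, ∏ j ∈ s.erase i, x j

theorem stmt6 {R : Type*} [CommRing R] (m : ℕ) (Z : Matrix (Fin m) (Fin m) R)
    (u : R) (σ : Equiv.Perm (Fin m)) :
    Ffam Finset.univ (fun i => (Z - u • 1) i (σ i)) =
      ∑ R' ∈ (Finset.univ.filter fun i => σ i = i).powerset,
        (-u) ^ R'.card * Ffam (Finset.univ \ R') (fun i => Z i (σ i)) := by
  classical
  set a : Fin m → R := fun i => Z i (σ i) with ha
  set b : Fin m → R := fun i => if σ i = i then -u else 0 with hb
  set f : Finset (Fin m) := Finset.univ.filter fun i => σ i = i with hf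
  have hentry : ∀ j, (Z - u • 1) j (σ j) = b j + a j := by
    intro j
    simp only [Matrix.sub_apply, Matrix.smul_apply, Matrix.one_apply, hb, ha, smul_eq_mul]
    by_cases h : σ j = j
    · simp [h, sub_eq_neg_add]
    · have : ¬ j = σ j := fun hh => h hh.symm
      simp [h, this, sub_eq_neg_add]
  -- key product expansion over any t
  have key : ∀ t : Finset (Fin m),
      ∏ j ∈ t, ((Z - u • 1) j (σ j)) =
        ∑ S ∈ (t ∩ f).powerset, (-u) ^ S.card * ∏ j ∈ t \ S, a j := by
    intro t
    calc ∏ j ∈ t, ((Z - u • 1) j (σ j)) = ∏ j ∈ t, (b j + a j) := by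
          exact Finset.prod_congr rfl fun j _ => hentry j
      _ = ∑ S ∈ t.powerset, (∏ j ∈ S, b j) * ∏ j ∈ t \ S, a j := Finset.prod_add b a t
      _ = ∑ S ∈ t.powerset, (if S ⊆ f then (-u) ^ S.card else 0) * ∏ j ∈ t \ S, a j := by
          refine Finset.sum_congr rfl fun S _ => ?_
          congr 1
          by_cases hS : S ⊆ f
          · rw [if_pos hS]
            have : ∀ j ∈ S, b j = -u := by
              intro j hj
              have := hS hj
              simp only [hf, Finset.mem_filter] at this
              simp [hb, this.2]
            rw [Finset.prod_congr rfl this, Finset.prod_const]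
          · rw [if_neg hS]
            obtain ⟨j, hjS, hjf⟩ := Finset.not_subset.mp hS
            have hbj : b j = 0 := by
              simp only [hf, Finset.mem_filter, Finset.mem_univ, true_and] at hjf
              simp [hb, hjf]
            exact Finset.prod_eq_zero hjS hbj
      _ = ∑ S ∈ t.powerset.filter (· ⊆ f), (-u) ^ S.card * ∏ j ∈ t \ S, a j := by
          rw [Finset.sum_filter]
          refine Finset.sum_congr rfl fun S _ => ?_
          by_cases hS : S ⊆ f <;> simp [hS]
      _ = ∑ S ∈ (t ∩ f).powerset, (-u) ^ S.card * ∏ j ∈ t \ S, a j := by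
          congr 1
          ext S
          simp only [Finset.mem_filter, Finset.mem_powerset, Finset.subset_inter_iff]
  unfold Ffam
  calc ∑ i : Fin m, ∏ j ∈ Finset.univ.erase i, ((Z - u • 1) j (σ j))
      = ∑ i : Fin m, ∑ S ∈ ((Finset.univ.erase i) ∩ f).powerset,
          (-u) ^ S.card * ∏ j ∈ (Finset.univ.erase i) \ S, a j := by
        exact Finset.sum_congr rfl fun i _ => key _
    _ = ∑ i : Fin m, ∑ S ∈ f.powerset,
          (if i ∉ S then (-u) ^ S.card * ∏ j ∈ (Finset.univ.erase i) \ S, a j else 0) := by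
        refine Finset.sum_congr rfl fun i _ => ?_
        have h1 : (Finset.univ.erase i) ∩ f = f.erase i := by
          ext j; simp [Finset.mem_erase, and_comm, and_left_comm]
        have h2 : (f.erase i).powerset = f.powerset.filter (fun S => i ∉ S) := by
          ext S
          simp [Finset.mem_powerset, Finset.subset_erase, and_comm]
        rw [h1, h2, Finset.sum_filter]
    _ = ∑ S ∈ f.powerset, ∑ i : Fin m,
          (if i ∉ S then (-u) ^ S.card * ∏ j ∈ (Finset.univ.erase i) \ S, a j else 0) :=
        Finset.sum_comm
    _ = ∑ S ∈ f.powerset, (-u) ^ S.card *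
          ∑ i ∈ Finset.univ \ S, ∏ j ∈ (Finset.univ \ S).erase i, a j := by
        refine Finset.sum_congr rfl fun S _ => ?_
        rw [Finset.mul_sum]
        rw [← Finset.sum_filter]
        have h3 : Finset.univ.filter (fun i => i ∉ S) = Finset.univ \ S := by
          ext i; simp
        rw [h3]
        refine Finset.sum_congr rfl fun i hi => ?_
        have h4 : (Finset.univ.erase i) \ S = (Finset.univ \ S).erase i := by
          ext j
          simp only [Finset.mem_sdiff, Finset.mem_erase, Finset.mem_univ, true_and]
          tauto
        rw [h4]
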